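/- arXiv:2309.09916 — 2 statements merged into one kernel-verified Lean document; each statement's English description precedes it below -/
import Mathlib

section
/- If C : [0,1]^d → [0,1] is a copula and F_1, ..., F_d are univariate cumulative distribution functions, then the function F(y_1,...,y_d) := C(F_1(y_1),...,F_d(y_d)) is a valid multivariate cumulative distribution function on ℝ^d whose j-th marginal distribution function equals F_j. -/
open MeasureTheory Set

open Filter

/-- Bounds on a CDF. -/
lemma sklar_aux_nonneg {F : ℝ → ℝ} (hmono : Monotone F)
    (hbot : Tendsto F atBot (nhds 0)) (t : ℝ) : 0 ≤ F t :=
  le_of_tendsto hbot ((eventually_le_atBot t).mono fun _ hx => hmono hx)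

lemma sklar_aux_le_one {F : ℝ → ℝ} (hmono : Monotone F)
    (htop : Tendsto F atTop (nhds 1)) (t : ℝ) : F t ≤ 1 :=
  ge_of_tendsto htop ((eventually_ge_atTop t).mono fun _ hx => hmono hx)

lemma sklar_aux_nonempty {F : ℝ → ℝ}
    (htop : Tendsto F atTop (nhds 1)) {u : ℝ} (hu : u < 1) :
    {x | u ≤ F x}.Nonempty := by
  obtain ⟨x, hx⟩ := (htop.eventually (eventually_gt_nhds hu)).exists
  exact ⟨x, hx.le⟩

lemma sklar_aux_bddBelow {F : ℝ → ℝ} (hmono : Monotone F)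
    (hbot : Tendsto F atBot (nhds 0)) {u : ℝ} (hu : 0 < u) :
    BddBelow {x | u ≤ F x} := by
  obtain ⟨x₀, hx₀⟩ := (hbot.eventually (eventually_lt_nhds hu)).exists
  refine ⟨x₀, fun x hx => ?_⟩
  by_contra h
  exact absurd (le_trans hx (hmono (le_of_not_ge h))) (not_le.2 hx₀)

/-- Galois property of the generalized inverse. -/
lemma sklar_aux_galois {F : ℝ → ℝ} (hmono : Monotone F)
    (hrc : ∀ x, ContinuousWithinAt F (Ici x) x)
    (hbot : Tendsto F atBot (nhds 0)) (htop : Tendsto F atTop (nhds 1))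
    {u : ℝ} (hu : u ∈ Ioo (0:ℝ) 1) (y : ℝ) :
    sInf {x | u ≤ F x} ≤ y ↔ u ≤ F y := by
  set S : Set ℝ := {x | u ≤ F x} with hS
  have hne : S.Nonempty := sklar_aux_nonempty htop hu.2
  have hbdd : BddBelow S := sklar_aux_bddBelow hmono hbot hu.1
  constructor
  · intro h
    have hsub : S ⊆ Ici (sInf S) := fun x hx => csInf_le hbdd hx
    have hcl : sInf S ∈ closure S := csInf_mem_closure hne hbdd
    have hnb : (nhdsWithin (sInf S) S).NeBot := mem_closure_iff_nhdsWithin_neBot.1 hcl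
    have hcw : ContinuousWithinAt F S (sInf S) := (hrc (sInf S)).mono hsub
    have hu' : u ≤ F (sInf S) :=
      ge_of_tendsto hcw.tendsto (eventually_nhdsWithin_of_forall fun x hx => hx)
    exact hu'.trans (hmono h)
  · intro h
    exact csInf_le hbdd h

/-- **Sklar's theorem (construction direction).**
If `C` is a `d`-variate copula (the joint CDF of a random vector `U` whose
coordinates are each uniformly distributed on `[0,1]`) and `F 1, …, F d` are
univariate cumulative distribution functions (monotone, right-continuous,
with limits `0` at `-∞` and `1` at `+∞`), then
`y ↦ C (F 1 (y 1), …, F d (y d))` is a valid multivariate cumulative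
distribution function on `ℝ^d`: there is a probability measure `μ` on `ℝ^d`
whose joint CDF is this function, and whose `j`-th marginal CDF is `F j`. -/
theorem sklar_construction
    (d : ℕ) (C : (Fin d → ℝ) → ℝ)
    (Ω : Type) [MeasurableSpace Ω] (ℙ : Measure Ω) [IsProbabilityMeasure ℙ]
    (U : Fin d → Ω → ℝ)
    (hUmeas : ∀ j, Measurable (U j))
    (hUunif : ∀ j, Measure.map (U j) ℙ = volume.restrict (Icc (0:ℝ) 1))
    (hC : ∀ u : Fin d → ℝ, C u = (ℙ {ω | ∀ j, U j ω ≤ u j}).toReal)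
    (F : Fin d → ℝ → ℝ)
    (hFmono : ∀ j, Monotone (F j))
    (hFrc : ∀ j x, ContinuousWithinAt (F j) (Ici x) x)
    (hFbot : ∀ j, Filter.Tendsto (F j) Filter.atBot (nhds 0))
    (hFtop : ∀ j, Filter.Tendsto (F j) Filter.atTop (nhds 1)) :
    ∃ μ : Measure (Fin d → ℝ), IsProbabilityMeasure μ ∧
      (∀ y : Fin d → ℝ,
        μ {x | ∀ j, x j ≤ y j} = ENNReal.ofReal (C (fun j => F j (y j)))) ∧
      (∀ j : Fin d, ∀ t : ℝ,
        μ {x | x j ≤ t} = ENNReal.ofReal (F j t)) := by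
  classical
  -- quantile functions on (0,1)
  set Q : Fin d → Ioo (0:ℝ) 1 → ℝ := fun j u => sInf {x | (u:ℝ) ≤ F j x} with hQdef
  have hQmono : ∀ j, Monotone (Q j) := by
    intro j u v huv
    exact csInf_le_csInf (sklar_aux_bddBelow (hFmono j) (hFbot j) u.2.1)
      (sklar_aux_nonempty (hFtop j) v.2.2)
      (fun x hx => le_trans (Subtype.coe_le_coe.2 huv) hx)
  -- measurable extension to all of ℝ
  set g : Fin d → ℝ → ℝ :=
    fun j => Function.extend (Subtype.val : Ioo (0:ℝ) 1 → ℝ) (Q j) (fun _ => 0) with hgdef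
  have hg_meas : ∀ j, Measurable (g j) := fun j =>
    (MeasurableEmbedding.subtype_coe measurableSet_Ioo).measurable_extend
      ((hQmono j).measurable) measurable_const
  have hg_eq : ∀ j (u : ℝ), u ∈ Ioo (0:ℝ) 1 → g j u = sInf {x | u ≤ F j x} := by
    intro j u hu
    have := Subtype.val_injective.extend_apply (Q j) (fun _ => (0:ℝ)) (⟨u, hu⟩ : Ioo (0:ℝ) 1)
    simpa [hgdef, hQdef] using this
  set X : Ω → Fin d → ℝ := fun ω j => g j (U j ω) with hXdef
  have hX : Measurable X :=
    measurable_pi_lambda _ fun j => (hg_meas j).comp (hUmeas j)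
  refine ⟨Measure.map X ℙ, Measure.isProbabilityMeasure_map hX.aemeasurable, ?_, ?_⟩
  all_goals {
    have hN : ℙ (⋃ j, U j ⁻¹' (Ioo (0:ℝ) 1)ᶜ) = 0 := by
      refine measure_iUnion_null fun j => ?_
      have h1 : ℙ (U j ⁻¹' (Ioo (0:ℝ) 1)ᶜ) = Measure.map (U j) ℙ ((Ioo (0:ℝ) 1)ᶜ) :=
        (Measure.map_apply (hUmeas j) measurableSet_Ioo.compl).symm
      rw [h1, hUunif j, Measure.restrict_apply measurableSet_Ioo.compl]
      refine measure_mono_null (fun x hx => ?_) (({0, 1} : Set ℝ).toFinite.countable.measure_zero _)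
      obtain ⟨hx1, hx2⟩ := hx
      simp only [mem_compl_iff, mem_Ioo, not_and_or, not_lt] at hx1
      rcases hx1 with h | h
      · exact Or.inl (le_antisymm h hx2.1)
      · exact Or.inr (le_antisymm hx2.2 h)
    have haeN : ∀ᵐ ω ∂ℙ, ∀ j, U j ω ∈ Ioo (0:ℝ) 1 := by
      have := measure_eq_zero_iff_ae_notMem.mp hN
      filter_upwards [this] with ω hω j
      by_contra h
      exact hω (mem_iUnion.2 ⟨j, h⟩)
    have hkey : ∀ (ω : Ω), (∀ j, U j ω ∈ Ioo (0:ℝ) 1) →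
        ∀ (j : Fin d) (y : ℝ), (g j (U j ω) ≤ y ↔ U j ω ≤ F j y) := by
      intro ω hω j y
      rw [hg_eq j _ (hω j)]
      exact sklar_aux_galois (hFmono j) (hFrc j) (hFbot j) (hFtop j) (hω j) y
    first
    | · -- joint CDF
        intro y
        have hms : MeasurableSet {x : Fin d → ℝ | ∀ j, x j ≤ y j} := by
          have : {x : Fin d → ℝ | ∀ j, x j ≤ y j} = ⋂ j, (fun x => x j) ⁻¹' Iic (y j) := by
            ext x; simp
          rw [this]
          exact MeasurableSet.iInter fun j => (measurable_pi_apply j) measurableSet_Iic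
        rw [Measure.map_apply hX hms]
        have hAe : X ⁻¹' {x | ∀ j, x j ≤ y j} =ᶠ[ae ℙ] {ω | ∀ j, U j ω ≤ F j (y j)} := by
          refine Filter.eventuallyEq_set.2 ?_
          filter_upwards [haeN] with ω hω
          simp only [mem_preimage, mem_setOf_eq, hXdef]
          exact forall_congr' fun j => hkey ω hω j (y j)
        rw [measure_congr hAe]
        rw [hC (fun j => F j (y j))]
        exact (ENNReal.ofReal_toReal (measure_ne_top ℙ _)).symm
    | · -- marginals
        intro j t
        have hms : MeasurableSet {x : Fin d → ℝ | x j ≤ t} :=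
          (measurable_pi_apply j) measurableSet_Iic
        rw [Measure.map_apply hX hms]
        have hAe : X ⁻¹' {x | x j ≤ t} =ᶠ[ae ℙ] U j ⁻¹' Iic (F j t) := by
          refine Filter.eventuallyEq_set.2 ?_
          filter_upwards [haeN] with ω hω
          simp only [mem_preimage, mem_setOf_eq, mem_Iic, hXdef]
          exact hkey ω hω j t
        rw [measure_congr hAe, ← Measure.map_apply (hUmeas j) measurableSet_Iic,
          hUunif j, Measure.restrict_apply measurableSet_Iic]
        have h01 : Iic (F j t) ∩ Icc 0 1 = Icc 0 (F j t) := by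
          ext x
          simp only [mem_inter_iff, mem_Iic, mem_Icc]
          exact ⟨fun h => ⟨h.2.1, h.1⟩,
            fun h => ⟨h.2, h.1, h.2.trans (sklar_aux_le_one (hFmono j) (hFtop j) t)⟩⟩
        rw [h01, Real.volume_Icc, sub_zero]
  }
end

section
/- With ranks as above forming a permutation of {1,...,n} in each dimension, the j-th marginal of the empirical beta copula is exactly the uniform distribution on [0,1]: for every u ∈ [0,1], (1/n) Σ_{i=1}^{n} F_{n,r_{i,j}}(u) = u, where F_{n,r}(u) = Σ_{p=r}^{n} C(n,p) u^p (1−u)^{n−p}. -/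
open Finset

/-- The CDF of the `Beta (r, n - r + 1)` distribution, written as the binomial
tail sum `F_{n,r}(u) = ∑_{p=r}^{n} C(n,p) u^p (1-u)^{n-p}`. -/
noncomputable def betaTailCdf (n r : ℕ) (u : ℝ) : ℝ :=
  ∑ p ∈ Finset.Icc r n, (n.choose p : ℝ) * u ^ p * (1 - u) ^ (n - p)

lemma sum_betaTailCdf (n : ℕ) (hn : 0 < n) (u : ℝ) :
    ∑ r ∈ Finset.Icc 1 n, betaTailCdf n r u = n * u := by
  obtain ⟨m, rfl⟩ : ∃ m, n = m + 1 := ⟨n - 1, by omega⟩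
  simp only [betaTailCdf]
  have hswap := Finset.sum_comm' (s := Finset.Icc 1 (m + 1))
    (t := fun r => Finset.Icc r (m + 1)) (t' := Finset.Icc 1 (m + 1))
    (s' := fun p => Finset.Icc 1 p)
    (f := fun _r p => ((m + 1).choose p : ℝ) * u ^ p * (1 - u) ^ (m + 1 - p))
    (fun r p => by simp only [Finset.mem_Icc]; omega)
  rw [hswap]
  have key : ∀ p ∈ Finset.Icc 1 (m + 1),
      (∑ _r ∈ Finset.Icc 1 p, ((m + 1).choose p : ℝ) * u ^ p * (1 - u) ^ (m + 1 - p))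
        = (p : ℝ) * (((m + 1).choose p : ℝ) * u ^ p * (1 - u) ^ (m + 1 - p)) := by
    intro p _
    rw [Finset.sum_const, Nat.card_Icc]
    simp [nsmul_eq_mul]
  rw [Finset.sum_congr rfl key]
  have hre : Finset.Icc 1 (m + 1) = Finset.map ⟨fun q => q + 1, add_left_injective 1⟩
      (Finset.range (m + 1)) := by
    ext x
    simp only [Finset.mem_Icc, Finset.mem_map, Finset.mem_range, Function.Embedding.coeFn_mk]
    constructor
    · intro hx; exact ⟨x - 1, by omega, by omega⟩
    · rintro ⟨q, hq, rfl⟩; omega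
  rw [hre, Finset.sum_map]
  simp only [Function.Embedding.coeFn_mk]
  have hterm : ∀ q ∈ Finset.range (m + 1),
      ((q + 1 : ℕ) : ℝ) * (((m + 1).choose (q + 1) : ℝ) * u ^ (q + 1) * (1 - u) ^ (m + 1 - (q + 1)))
        = ((m + 1 : ℕ) : ℝ) * u * ((m.choose q : ℝ) * u ^ q * (1 - u) ^ (m - q)) := by
    intro q _
    have h : (q + 1) * ((m + 1).choose (q + 1)) = (m + 1) * m.choose q := by
      rw [mul_comm, ← Nat.add_one_mul_choose_eq]
    have h' : ((q + 1 : ℕ) : ℝ) * (((m + 1).choose (q + 1) : ℝ))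
        = ((m + 1 : ℕ) : ℝ) * (m.choose q : ℝ) := by exact_mod_cast congrArg Nat.cast h
    have hsub : m + 1 - (q + 1) = m - q := by omega
    rw [hsub]
    calc ((q + 1 : ℕ) : ℝ) * (((m + 1).choose (q + 1) : ℝ) * u ^ (q + 1) * (1 - u) ^ (m - q))
        = (((q + 1 : ℕ) : ℝ) * ((m + 1).choose (q + 1) : ℝ)) * (u ^ (q + 1) * (1 - u) ^ (m - q)) :=
          by ring
      _ = (((m + 1 : ℕ) : ℝ) * (m.choose q : ℝ)) * (u ^ (q + 1) * (1 - u) ^ (m - q)) := by rw [h']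
      _ = ((m + 1 : ℕ) : ℝ) * u * ((m.choose q : ℝ) * u ^ q * (1 - u) ^ (m - q)) := by ring
  rw [Finset.sum_congr rfl hterm, ← Finset.mul_sum]
  have hbin : ∑ q ∈ Finset.range (m + 1), (m.choose q : ℝ) * u ^ q * (1 - u) ^ (m - q) = 1 := by
    have h := add_pow u (1 - u) m
    rw [show u + (1 - u) = 1 by ring, one_pow] at h
    calc ∑ q ∈ Finset.range (m + 1), (m.choose q : ℝ) * u ^ q * (1 - u) ^ (m - q)
        = ∑ q ∈ Finset.range (m + 1), u ^ q * (1 - u) ^ (m - q) * (m.choose q : ℝ) := by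
          exact Finset.sum_congr rfl fun q _ => by ring
      _ = 1 := h.symm
  rw [hbin]
  push_cast
  ring

/-- **The empirical beta copula has uniform margins.**
With distinct observations `y 1, …, y n` in dimension `j`, whose ranks
`r i = #{k : y k ≤ y i}` form a permutation of `{1,…,n}`, the `j`-th marginal
of the empirical beta copula is exactly the uniform distribution on `[0,1]`:
for every `u ∈ [0,1]`, `(1/n) ∑ᵢ F_{n, r i}(u) = u`. -/
theorem empirical_beta_copula_marginal
    (n : ℕ) (hn : 0 < n) (y : Fin n → ℝ) (hy : Function.Injective y)
    (u : ℝ) (hu : u ∈ Set.Icc (0:ℝ) 1) :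
    (1 / (n : ℝ)) * ∑ i : Fin n,
        betaTailCdf n (({k : Fin n | y k ≤ y i} : Finset (Fin n)).card) u
      = u := by
  classical
  set rk : Fin n → ℕ := fun i => ({k : Fin n | y k ≤ y i} : Finset (Fin n)).card with hrk
  have hinj : Function.Injective rk := by
    intro i j hij
    have hsub : ∀ a b : Fin n, y a ≤ y b →
        ({k : Fin n | y k ≤ y a} : Finset (Fin n)) ⊆
          ({k : Fin n | y k ≤ y b} : Finset (Fin n)) := by
      intro a b hab k hk
      simp only [Finset.mem_filter, Finset.mem_univ, true_and] at hk ⊢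
      exact hk.trans hab
    rcases le_total (y i) (y j) with h | h
    · have hset : ({k : Fin n | y k ≤ y i} : Finset (Fin n))
          = ({k : Fin n | y k ≤ y j} : Finset (Fin n)) :=
        Finset.eq_of_subset_of_card_le (hsub i j h) (le_of_eq hij.symm)
      have hj : j ∈ ({k : Fin n | y k ≤ y i} : Finset (Fin n)) := by
        rw [hset]; simp
      simp only [Finset.mem_filter, Finset.mem_univ, true_and] at hj
      exact hy (le_antisymm h hj)
    · have hset : ({k : Fin n | y k ≤ y j} : Finset (Fin n))
          = ({k : Fin n | y k ≤ y i} : Finset (Fin n)) :=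
        Finset.eq_of_subset_of_card_le (hsub j i h) (le_of_eq hij)
      have hi : i ∈ ({k : Fin n | y k ≤ y j} : Finset (Fin n)) := by
        rw [hset]; simp
      simp only [Finset.mem_filter, Finset.mem_univ, true_and] at hi
      exact hy (le_antisymm hi h)
  have hmem : ∀ i, rk i ∈ Finset.Icc 1 n := by
    intro i
    simp only [Finset.mem_Icc]
    constructor
    · have : i ∈ ({k : Fin n | y k ≤ y i} : Finset (Fin n)) := by simp
      exact Finset.card_pos.mpr ⟨i, this⟩
    · simpa using Finset.card_filter_le Finset.univ (fun k => y k ≤ y i)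
  have himg : Finset.image rk Finset.univ = Finset.Icc 1 n := by
    apply Finset.eq_of_subset_of_card_le
    · intro r hr
      obtain ⟨i, _, rfl⟩ := Finset.mem_image.mp hr
      exact hmem i
    · rw [Finset.card_image_of_injective _ hinj]
      simp [Nat.card_Icc]
  have hsum : ∑ i : Fin n, betaTailCdf n (rk i) u = ∑ r ∈ Finset.Icc 1 n, betaTailCdf n r u := by
    rw [← himg, Finset.sum_image (fun a _ b _ h => hinj h)]
  rw [hsum, sum_betaTailCdf n hn u]
  have hn' : (n : ℝ) ≠ 0 := Nat.cast_ne_zero.mpr hn.ne'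
  field_simp
end
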